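/- For every u^0 : Ω_h → ℝ there exists exactly one function u_h : Ω_h × [0,∞) → ℝ such that t ↦ u_h(x,t) is continuously differentiable on [0,∞) for each x ∈ Ω_h, u_h(x,0) = u^0(x) for all x ∈ Ω_h, and ∂_t u_h(x,t) = (H_h u_h(·,t))(x) for all x ∈ Ω_h and all t ≥ 0 (i.e. u_h is the unique global classical solution of the state-constrained discrete Hamilton–Jacobi equation with initial datum u^0). -/

import Mathlib

open scoped Classical BigOperators
open MeasureTheory

set_option synthInstance.maxHeartbeats 1000000
set_option maxHeartbeats 1000000

noncomputable section

/-- Shift a grid point `x` by the integer vector `ν` scaled by `h`. -/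
def shiftPt {N : ℕ} (h : ℝ) (x : Fin N → ℝ) (ν : Fin N → ℤ) : Fin N → ℝ :=
  fun k => x k + (ν k : ℝ) * h

/-- The state-constrained discrete Hamiltonian `H_h`. -/
def discHam {N M : ℕ} (h : ℝ) (Ωh : Finset (Fin N → ℝ)) (ν : Fin M → Fin N → ℤ)
    (Φp Φm : Fin M → (Fin N → ℝ) → ℝ) (u : (Fin N → ℝ) → ℝ) (x : Fin N → ℝ) : ℝ :=
  ∑ j : Fin M,
    ((if shiftPt h x (ν j) ∈ Ωh then
        Φp j x * (Real.exp ((u (shiftPt h x (ν j)) - u x) / h) - 1) else 0)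
      + (if shiftPt h x (-(ν j)) ∈ Ωh then
        Φm j x * (Real.exp ((u (shiftPt h x (-(ν j))) - u x) / h) - 1) else 0))

/-- `u` is a global classical solution on `[0,∞)` of the state-constrained
discrete Hamilton–Jacobi equation `∂ₜ u = H_h u` on `Ω_h` with initial datum `u0`:
for every grid point, the time slice is continuously differentiable on `[0,∞)`
(the derivative `H_h u(·,t)` depends continuously on `t`) and the equation holds. -/
def solvesDHJ {N M : ℕ} (h : ℝ) (Ωh : Finset (Fin N → ℝ)) (ν : Fin M → Fin N → ℤ)
    (Φp Φm : Fin M → (Fin N → ℝ) → ℝ)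
    (u0 : (Fin N → ℝ) → ℝ) (u : (Fin N → ℝ) → ℝ → ℝ) : Prop :=
  (∀ x ∈ Ωh, u x 0 = u0 x) ∧
  (∀ x ∈ Ωh, ∀ t ∈ Set.Ici (0:ℝ),
    HasDerivWithinAt (fun s => u x s)
      (discHam h Ωh ν Φp Φm (fun y => u y t) x) (Set.Ici 0) t) ∧
  (∀ x ∈ Ωh,
    ContinuousOn (fun t => discHam h Ωh ν Φp Φm (fun y => u y t) x) (Set.Ici 0))

/-! ### Auxiliary machinery: the linearizing substitution `w = exp(u/h)` -/

/-- The linear generator of the substituted (Cole–Hopf transformed) system. -/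
def gridA {N M : ℕ} (h : ℝ) (Ωh : Finset (Fin N → ℝ)) (ν : Fin M → Fin N → ℤ)
    (Φp Φm : Fin M → (Fin N → ℝ) → ℝ) :
    ({x // x ∈ Ωh} → ℝ) →L[ℝ] ({x // x ∈ Ωh} → ℝ) :=
  LinearMap.toContinuousLinearMap
  { toFun := fun w x => (1/h) * ∑ j : Fin M,
      ((if hy : shiftPt h x.1 (ν j) ∈ Ωh then Φp j x.1 * (w ⟨_, hy⟩ - w x) else 0)
        + (if hy : shiftPt h x.1 (-(ν j)) ∈ Ωh then Φm j x.1 * (w ⟨_, hy⟩ - w x) else 0))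
    map_add' := by
      intro w v
      funext x
      simp only [Pi.add_apply]
      rw [← mul_add, ← Finset.sum_add_distrib]
      congr 1
      refine Finset.sum_congr rfl (fun j _ => ?_)
      split_ifs <;> ring
    map_smul' := by
      intro c w
      funext x
      simp only [Pi.smul_apply, smul_eq_mul, RingHom.id_apply]
      rw [show c * ((1/h) * ∑ j : Fin M,
      ((if hy : shiftPt h x.1 (ν j) ∈ Ωh then Φp j x.1 * (w ⟨_, hy⟩ - w x) else 0)
        + (if hy : shiftPt h x.1 (-(ν j)) ∈ Ωh then Φm j x.1 * (w ⟨_, hy⟩ - w x) else 0)))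
        = (1/h) * ∑ j : Fin M, c *
      ((if hy : shiftPt h x.1 (ν j) ∈ Ωh then Φp j x.1 * (w ⟨_, hy⟩ - w x) else 0)
        + (if hy : shiftPt h x.1 (-(ν j)) ∈ Ωh then Φm j x.1 * (w ⟨_, hy⟩ - w x) else 0))
        from by rw [← Finset.mul_sum]; ring]
      congr 1
      refine Finset.sum_congr rfl (fun j _ => ?_)
      split_ifs <;> ring }

lemma gridA_apply {N M : ℕ} (h : ℝ) (Ωh : Finset (Fin N → ℝ)) (ν : Fin M → Fin N → ℤ)
    (Φp Φm : Fin M → (Fin N → ℝ) → ℝ) (w : {x // x ∈ Ωh} → ℝ) (x : {x // x ∈ Ωh}) :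
    gridA h Ωh ν Φp Φm w x = (1/h) * ∑ j : Fin M,
      ((if hy : shiftPt h x.1 (ν j) ∈ Ωh then Φp j x.1 * (w ⟨_, hy⟩ - w x) else 0)
        + (if hy : shiftPt h x.1 (-(ν j)) ∈ Ωh then Φm j x.1 * (w ⟨_, hy⟩ - w x) else 0)) := rfl

/-- Positivity of the semigroup `exp(tA)` applied to a positive vector, for a
Metzler-type generator `A` (i.e. `A + c·1` preserves the nonnegative cone). -/
lemma expflow_pos {ι : Type*} [Fintype ι] (A : (ι → ℝ) →L[ℝ] (ι → ℝ)) (c : ℝ)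
    (hcone : ∀ w : ι → ℝ, (∀ y, 0 ≤ w y) → ∀ y, 0 ≤ A w y + c * w y)
    (w0 : ι → ℝ) (hw0 : ∀ y, 0 < w0 y) {t : ℝ} (ht : 0 ≤ t) (x : ι) :
    0 < (NormedSpace.exp (t • A)) w0 x := by
  set B : (ι → ℝ) →L[ℝ] (ι → ℝ) := A + c • (1 : (ι → ℝ) →L[ℝ] (ι → ℝ)) with hBdef
  have hB : ∀ w : ι → ℝ, (∀ y, 0 ≤ w y) → ∀ y, 0 ≤ B w y := by
    intro w hw y
    simpa [hBdef, ContinuousLinearMap.add_apply, ContinuousLinearMap.smul_apply,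
      ContinuousLinearMap.one_apply, smul_eq_mul] using hcone w hw y
  have hBn : ∀ (k : ℕ) (w : ι → ℝ), (∀ y, 0 ≤ w y) → ∀ y, 0 ≤ ((B ^ k) w) y := by
    intro k
    induction k with
    | zero => intro w hw y; simpa using hw y
    | succ k ih =>
      intro w hw y
      have : (B ^ (k+1)) w = (B ^ k) (B w) := by
        rw [pow_succ, ContinuousLinearMap.mul_apply]
      rw [this]
      exact ih (B w) (fun z => hB w hw z) y
  set φ : ((ι → ℝ) →L[ℝ] (ι → ℝ)) →L[ℝ] ℝ :=
    (ContinuousLinearMap.proj x).comp (ContinuousLinearMap.apply ℝ (ι → ℝ) w0) with hφdef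
  have hφ : ∀ L : (ι → ℝ) →L[ℝ] (ι → ℝ), φ L = L w0 x := fun L => rfl
  have hsum : Summable (fun k : ℕ => ((k.factorial : ℝ))⁻¹ • (t • B) ^ k) :=
    NormedSpace.expSeries_summable' (𝕂 := ℝ) (t • B)
  have hsum2 : Summable (fun k : ℕ => φ (((k.factorial : ℝ))⁻¹ • (t • B) ^ k)) :=
    hsum.map φ.toLinearMap.toAddMonoidHom φ.continuous
  have hterm : ∀ k : ℕ, φ (((k.factorial : ℝ))⁻¹ • (t • B) ^ k)
      = ((k.factorial : ℝ))⁻¹ * t ^ k * ((B ^ k) w0 x) := by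
    intro k
    rw [smul_pow]
    simp [hφ, ContinuousLinearMap.smul_apply, smul_eq_mul, mul_assoc]
  have hkey : w0 x ≤ (NormedSpace.exp (t • B)) w0 x := by
    have heval : (NormedSpace.exp (t • B)) w0 x
        = ∑' k : ℕ, φ (((k.factorial : ℝ))⁻¹ • (t • B) ^ k) := by
      rw [NormedSpace.exp_eq_tsum ℝ]
      exact (φ.map_tsum hsum)
    rw [heval]
    have h0 : φ (((Nat.factorial 0 : ℝ))⁻¹ • (t • B) ^ 0) = w0 x := by
      rw [hterm 0]; simp
    calc w0 x = φ (((Nat.factorial 0 : ℝ))⁻¹ • (t • B) ^ 0) := h0.symm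
      _ ≤ ∑' k : ℕ, φ (((k.factorial : ℝ))⁻¹ • (t • B) ^ k) := by
          refine hsum2.le_tsum 0 (fun k _ => ?_)
          rw [hterm k]
          have := hBn k w0 (fun y => (hw0 y).le) x
          positivity
  have hAc : t • A = t • B + (-(t * c)) • (1 : (ι → ℝ) →L[ℝ] (ι → ℝ)) := by
    rw [hBdef]; module
  have hcomm : Commute (t • B) ((-(t * c)) • (1 : (ι → ℝ) →L[ℝ] (ι → ℝ))) :=
    ((Commute.one_right (t • B)).smul_right _)
  have hsplit : NormedSpace.exp (t • A)
      = Real.exp (-(t * c)) • NormedSpace.exp (t • B) := by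
    rw [hAc, NormedSpace.exp_add_of_commute_of_mem_ball (𝕂 := ℝ) hcomm
      ((NormedSpace.expSeries_radius_eq_top ℝ ((ι → ℝ) →L[ℝ] (ι → ℝ))).symm ▸ edist_lt_top _ _)
      ((NormedSpace.expSeries_radius_eq_top ℝ ((ι → ℝ) →L[ℝ] (ι → ℝ))).symm ▸ edist_lt_top _ _)]
    have h1 : NormedSpace.exp ((-(t * c)) • (1 : (ι → ℝ) →L[ℝ] (ι → ℝ)))
        = Real.exp (-(t * c)) • (1 : (ι → ℝ) →L[ℝ] (ι → ℝ)) := by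
      rw [← Algebra.algebraMap_eq_smul_one, ← NormedSpace.algebraMap_exp_comm,
        ← Real.exp_eq_exp_ℝ, Algebra.algebraMap_eq_smul_one]
    rw [h1, mul_smul_comm, mul_one]
  rw [hsplit]
  have : (Real.exp (-(t * c)) • NormedSpace.exp (t • B)) w0 x
      = Real.exp (-(t * c)) * ((NormedSpace.exp (t • B)) w0 x) := by
    simp [ContinuousLinearMap.smul_apply, smul_eq_mul]
  rw [this]
  exact mul_pos (Real.exp_pos _) (lt_of_lt_of_le (hw0 x) hkey)

/-- Time derivative of the flow `t ↦ exp(tA) w₀`. -/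
lemma expflow_hasDerivAt {ι : Type*} [Fintype ι] (A : (ι → ℝ) →L[ℝ] (ι → ℝ))
    (w0 : ι → ℝ) (t : ℝ) :
    HasDerivAt (fun s => NormedSpace.exp (s • A) w0) (A (NormedSpace.exp (t • A) w0)) t := by
  have h1 := hasDerivAt_exp_smul_const' (𝕂 := ℝ) A t
  have h2 := (ContinuousLinearMap.apply ℝ (ι → ℝ) w0).hasFDerivAt.comp_hasDerivAt t h1
  exact h2

/-- The discrete Hamiltonian of `h·log g`, for positive `g`, is the linear operator
`gridA` applied to `g`, divided by `g` and multiplied by `h`. -/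
lemma discHam_log_eq {N M : ℕ} {h : ℝ} (hh : 0 < h) (Ωh : Finset (Fin N → ℝ))
    (ν : Fin M → Fin N → ℤ) (Φp Φm : Fin M → (Fin N → ℝ) → ℝ)
    (u0 : (Fin N → ℝ) → ℝ) (g : {x // x ∈ Ωh} → ℝ) (hg : ∀ y, 0 < g y)
    (x : Fin N → ℝ) (hx : x ∈ Ωh) :
    discHam h Ωh ν Φp Φm (fun y => if hy : y ∈ Ωh then h * Real.log (g ⟨y, hy⟩) else u0 y) x
      = h * (gridA h Ωh ν Φp Φm g ⟨x, hx⟩ / g ⟨x, hx⟩) := by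
  have hh' : h ≠ 0 := hh.ne'
  have hgx : g ⟨x, hx⟩ ≠ 0 := (hg _).ne'
  rw [gridA_apply]
  rw [show h * ((1/h) * (∑ j : Fin M,
      ((if hy : shiftPt h x (ν j) ∈ Ωh then Φp j x * (g ⟨_, hy⟩ - g ⟨x, hx⟩) else 0)
        + (if hy : shiftPt h x (-(ν j)) ∈ Ωh then Φm j x * (g ⟨_, hy⟩ - g ⟨x, hx⟩) else 0)))
        / g ⟨x, hx⟩)
      = ∑ j : Fin M,
      (((if hy : shiftPt h x (ν j) ∈ Ωh then Φp j x * (g ⟨_, hy⟩ - g ⟨x, hx⟩) else 0)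
        + (if hy : shiftPt h x (-(ν j)) ∈ Ωh then Φm j x * (g ⟨_, hy⟩ - g ⟨x, hx⟩) else 0))
        * (g ⟨x, hx⟩)⁻¹)
      from by rw [← Finset.sum_mul]; field_simp]
  unfold discHam
  refine Finset.sum_congr rfl (fun j _ => ?_)
  rw [add_mul]
  congr 1
  · split_ifs with hz
    · simp only [dif_pos hz, dif_pos hx]
      rw [show h * Real.log (g ⟨shiftPt h x (ν j), hz⟩) - h * Real.log (g ⟨x, hx⟩)
          = h * (Real.log (g ⟨shiftPt h x (ν j), hz⟩) - Real.log (g ⟨x, hx⟩)) from by ring,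
        mul_div_assoc, mul_comm h, div_mul_cancel₀ _ hh', Real.exp_sub, Real.exp_log (hg _),
        Real.exp_log (hg _)]
      field_simp
    · simp
  · split_ifs with hz
    · simp only [dif_pos hz, dif_pos hx]
      rw [show h * Real.log (g ⟨shiftPt h x (-(ν j)), hz⟩) - h * Real.log (g ⟨x, hx⟩)
          = h * (Real.log (g ⟨shiftPt h x (-(ν j)), hz⟩) - Real.log (g ⟨x, hx⟩)) from by ring,
        mul_div_assoc, mul_comm h, div_mul_cancel₀ _ hh', Real.exp_sub, Real.exp_log (hg _),
        Real.exp_log (hg _)]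
      field_simp
    · simp

/-- Cole–Hopf: the substituted derivative identity used in the uniqueness argument. -/
lemma exp_discHam_eq {N M : ℕ} {h : ℝ} (hh : 0 < h) (Ωh : Finset (Fin N → ℝ))
    (ν : Fin M → Fin N → ℤ) (Φp Φm : Fin M → (Fin N → ℝ) → ℝ)
    (f : (Fin N → ℝ) → ℝ) (y : {x // x ∈ Ωh}) :
    Real.exp (f y.1 / h) * (discHam h Ωh ν Φp Φm f y.1 / h)
      = gridA h Ωh ν Φp Φm (fun z => Real.exp (f z.1 / h)) y := by
  have hh' : h ≠ 0 := hh.ne'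
  rw [gridA_apply]
  rw [show Real.exp (f y.1 / h) * (discHam h Ωh ν Φp Φm f y.1 / h)
      = (1/h) * (Real.exp (f y.1 / h) * discHam h Ωh ν Φp Φm f y.1) from by ring]
  congr 1
  unfold discHam
  rw [Finset.mul_sum]
  refine Finset.sum_congr rfl (fun j _ => ?_)
  rw [mul_add]
  congr 1
  · split_ifs with hz
    · have hxy : Real.exp (f y.1 / h) * Real.exp ((f (shiftPt h y.1 (ν j)) - f y.1) / h)
          = Real.exp (f (shiftPt h y.1 (ν j)) / h) := by
        rw [← Real.exp_add]; congr 1; field_simp; ring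
      rw [show Real.exp (f y.1 / h)
            * (Φp j y.1 * (Real.exp ((f (shiftPt h y.1 (ν j)) - f y.1) / h) - 1))
          = Φp j y.1 * (Real.exp (f y.1 / h)
            * Real.exp ((f (shiftPt h y.1 (ν j)) - f y.1) / h) - Real.exp (f y.1 / h))
          from by ring, hxy]
    · simp
  · split_ifs with hz
    · have hxy : Real.exp (f y.1 / h) * Real.exp ((f (shiftPt h y.1 (-(ν j))) - f y.1) / h)
          = Real.exp (f (shiftPt h y.1 (-(ν j))) / h) := by
        rw [← Real.exp_add]; congr 1; field_simp; ring
      rw [show Real.exp (f y.1 / h)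
            * (Φm j y.1 * (Real.exp ((f (shiftPt h y.1 (-(ν j))) - f y.1) / h) - 1))
          = Φm j y.1 * (Real.exp (f y.1 / h)
            * Real.exp ((f (shiftPt h y.1 (-(ν j))) - f y.1) / h) - Real.exp (f y.1 / h))
          from by ring, hxy]
    · simp

/-- **Well-posedness of the discrete HJE**: for every initial datum there exists a
global classical solution of the state-constrained discrete Hamilton–Jacobi
equation, and it is unique on `Ω_h × [0,∞)`. -/
theorem discrete_HJE_wellposed
    {N M : ℕ} (hN : 0 < N) (hM : 0 < M)
    (h : ℝ) (hh : 0 < h)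
    (Ω : Set (Fin N → ℝ)) (hΩo : IsOpen Ω) (hΩne : Ω.Nonempty)
    (hΩbd : Bornology.IsBounded Ω)
    (hΩpos : closure Ω ⊆ {x : Fin N → ℝ | ∀ k, 0 < x k})
    (ν : Fin M → Fin N → ℤ)
    (Φp Φm : Fin M → (Fin N → ℝ) → ℝ)
    (hΦpc : ∀ j, ContinuousOn (Φp j) (closure Ω))
    (hΦmc : ∀ j, ContinuousOn (Φm j) (closure Ω))
    (hΦp0 : ∀ j, ∀ x ∈ closure Ω, 0 ≤ Φp j x)
    (hΦm0 : ∀ j, ∀ x ∈ closure Ω, 0 ≤ Φm j x)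
    (Ωh : Finset (Fin N → ℝ))
    (hΩh : ∀ x : Fin N → ℝ,
      x ∈ Ωh ↔ ((∃ i : Fin N → ℕ, ∀ k, x k = (i k : ℝ) * h) ∧ x ∈ closure Ω))
    (hne : Ωh.Nonempty)
    (u0 : (Fin N → ℝ) → ℝ) :
    ∃ u : (Fin N → ℝ) → ℝ → ℝ,
      solvesDHJ h Ωh ν Φp Φm u0 u ∧
      ∀ v : (Fin N → ℝ) → ℝ → ℝ, solvesDHJ h Ωh ν Φp Φm u0 v →
        ∀ x ∈ Ωh, ∀ t ∈ Set.Ici (0:ℝ), u x t = v x t := by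
  classical
  have hh' : h ≠ 0 := hh.ne'
  have hΩhsub : ∀ x ∈ Ωh, x ∈ closure Ω := fun x hx => ((hΩh x).1 hx).2
  set A := gridA h Ωh ν Φp Φm with hAdef
  set w0 : {x // x ∈ Ωh} → ℝ := fun y => Real.exp (u0 y.1 / h) with hw0def
  set W : ℝ → {x // x ∈ Ωh} → ℝ := fun t => NormedSpace.exp (t • A) w0 with hWdef
  -- the cone constant
  set c : ℝ := (1/h) * ∑ x ∈ Ωh, ∑ j : Fin M, (Φp j x + Φm j x) with hcdef
  have hΦx : ∀ x ∈ Ωh, 0 ≤ ∑ j : Fin M, (Φp j x + Φm j x) := by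
    intro x hx
    exact Finset.sum_nonneg fun j _ =>
      add_nonneg (hΦp0 j x (hΩhsub x hx)) (hΦm0 j x (hΩhsub x hx))
  have hcone : ∀ w : {x // x ∈ Ωh} → ℝ, (∀ y, 0 ≤ w y) → ∀ y, 0 ≤ A w y + c * w y := by
    intro w hw y
    have hy' : (y : Fin N → ℝ) ∈ closure Ω := hΩhsub _ y.2
    rw [hAdef, gridA_apply]
    have hterm : ∀ j : Fin M, -((Φp j y.1 + Φm j y.1) * w y) ≤
        ((if hz : shiftPt h y.1 (ν j) ∈ Ωh then Φp j y.1 * (w ⟨_, hz⟩ - w y) else 0)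
          + (if hz : shiftPt h y.1 (-(ν j)) ∈ Ωh then Φm j y.1 * (w ⟨_, hz⟩ - w y) else 0)) := by
      intro j
      have hp := hΦp0 j _ hy'
      have hm := hΦm0 j _ hy'
      have h1 : -(Φp j y.1 * w y) ≤
          (if hz : shiftPt h y.1 (ν j) ∈ Ωh then Φp j y.1 * (w ⟨_, hz⟩ - w y) else 0) := by
        split_ifs with hz
        · nlinarith [hw ⟨_, hz⟩, hw y]
        · nlinarith [hw y]
      have h2 : -(Φm j y.1 * w y) ≤
          (if hz : shiftPt h y.1 (-(ν j)) ∈ Ωh then Φm j y.1 * (w ⟨_, hz⟩ - w y) else 0) := by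
        split_ifs with hz
        · nlinarith [hw ⟨_, hz⟩, hw y]
        · nlinarith [hw y]
      nlinarith [h1, h2]
    have hsum_ge : -((∑ j : Fin M, (Φp j y.1 + Φm j y.1)) * w y) ≤
        ∑ j : Fin M,
          ((if hz : shiftPt h y.1 (ν j) ∈ Ωh then Φp j y.1 * (w ⟨_, hz⟩ - w y) else 0)
            + (if hz : shiftPt h y.1 (-(ν j)) ∈ Ωh then Φm j y.1 * (w ⟨_, hz⟩ - w y) else 0)) := by
      rw [Finset.sum_mul, ← Finset.sum_neg_distrib]
      exact Finset.sum_le_sum fun j _ => hterm j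
    have hSyle : (∑ j : Fin M, (Φp j y.1 + Φm j y.1))
        ≤ ∑ x ∈ Ωh, ∑ j : Fin M, (Φp j x + Φm j x) :=
      Finset.single_le_sum (fun x hx => hΦx x hx) y.2
    have h1h : (0:ℝ) ≤ 1/h := by positivity
    have hwy := hw y
    have htot := hΦx y.1 y.2
    calc (0:ℝ) ≤ (1/h) * ((∑ j : Fin M,
          ((if hz : shiftPt h y.1 (ν j) ∈ Ωh then Φp j y.1 * (w ⟨_, hz⟩ - w y) else 0)
            + (if hz : shiftPt h y.1 (-(ν j)) ∈ Ωh then Φm j y.1 * (w ⟨_, hz⟩ - w y) else 0)))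
          + (∑ x ∈ Ωh, ∑ j : Fin M, (Φp j x + Φm j x)) * w y) := by
          apply mul_nonneg h1h
          nlinarith [hsum_ge, mul_le_mul_of_nonneg_right hSyle hwy]
      _ = (1/h) * (∑ j : Fin M,
          ((if hz : shiftPt h y.1 (ν j) ∈ Ωh then Φp j y.1 * (w ⟨_, hz⟩ - w y) else 0)
            + (if hz : shiftPt h y.1 (-(ν j)) ∈ Ωh then Φm j y.1 * (w ⟨_, hz⟩ - w y) else 0)))
          + c * w y := by rw [hcdef]; ring
  have hWpos : ∀ {t : ℝ}, 0 ≤ t → ∀ x : {x // x ∈ Ωh}, 0 < W t x := by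
    intro t ht x
    exact expflow_pos A c hcone w0 (fun y => Real.exp_pos _) ht x
  have hWderiv : ∀ t : ℝ, HasDerivAt W (A (W t)) t := fun t => expflow_hasDerivAt A w0 t
  have hWcont : Continuous W := continuous_iff_continuousAt.2 fun t => (hWderiv t).continuousAt
  have hW0 : W 0 = w0 := by
    rw [hWdef]
    simp only [zero_smul, NormedSpace.exp_zero]
    rfl
  refine ⟨fun x t => if hx : x ∈ Ωh then h * Real.log (W t ⟨x, hx⟩) else u0 x, ?_, ?_⟩
  · -- it is a solution
    have hkey : ∀ t : ℝ, 0 ≤ t → ∀ (x : Fin N → ℝ) (hx : x ∈ Ωh),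
        discHam h Ωh ν Φp Φm
          (fun y => if hy : y ∈ Ωh then h * Real.log (W t ⟨y, hy⟩) else u0 y) x
        = h * (A (W t) ⟨x, hx⟩ / W t ⟨x, hx⟩) := by
      intro t ht x hx
      rw [discHam_log_eq hh Ωh ν Φp Φm u0 (W t) (fun y => hWpos ht y) x hx, hAdef]
    refine ⟨?_, ?_, ?_⟩
    · intro x hx
      simp only [dif_pos hx]
      rw [hW0, hw0def]
      rw [Real.log_exp, mul_comm, div_mul_cancel₀ _ hh']
    · intro x hx t ht
      rw [hkey t ht x hx]
      have hdW : HasDerivAt (fun s => W s ⟨x, hx⟩) (A (W t) ⟨x, hx⟩) t :=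
        hasDerivAt_pi.1 (hWderiv t) ⟨x, hx⟩
      have hlog : HasDerivAt (fun s => h * Real.log (W s ⟨x, hx⟩))
          (h * (A (W t) ⟨x, hx⟩ / W t ⟨x, hx⟩)) t :=
        (hdW.log (hWpos ht ⟨x, hx⟩).ne').const_mul h
      have : (fun s => (if hx' : x ∈ Ωh then h * Real.log (W s ⟨x, hx'⟩) else u0 x))
          = fun s => h * Real.log (W s ⟨x, hx⟩) := by
        funext s; rw [dif_pos hx]
      rw [this]
      exact hlog.hasDerivWithinAt
    · intro x hx
      have hcont : ContinuousOn (fun t => h * (A (W t) ⟨x, hx⟩ / W t ⟨x, hx⟩))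
          (Set.Ici (0:ℝ)) := by
        apply ContinuousOn.mul continuousOn_const
        apply ContinuousOn.div
        · exact ((continuous_apply (⟨x, hx⟩ : {x // x ∈ Ωh})).comp
            (A.continuous.comp hWcont)).continuousOn
        · exact ((continuous_apply (⟨x, hx⟩ : {x // x ∈ Ωh})).comp hWcont).continuousOn
        · intro t ht
          exact (hWpos ht ⟨x, hx⟩).ne'
      exact hcont.congr fun t ht => hkey t ht x hx
  · -- uniqueness
    intro v hv x hx t ht
    obtain ⟨hvinit, hvderiv, -⟩ := hv
    have ht0 : (0:ℝ) ≤ t := ht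
    set Wv : ℝ → {x // x ∈ Ωh} → ℝ := fun s y => Real.exp (v y.1 s / h) with hWvdef
    have hWveq : Set.EqOn W Wv (Set.Icc 0 t) := by
      refine ODE_solution_unique_of_mem_Icc_right
        (v := fun _ w => A w) (s := fun _ => Set.univ) (K := ‖A‖₊)
        ?_
        hWcont.continuousOn (fun s _ => (hWderiv s).hasDerivWithinAt)
        (fun _ _ => trivial) ?_ ?_ (fun _ _ => trivial) ?_
      · intro s _ w _ w' _
        exact A.lipschitz w w'
      · -- continuity of Wv
        rw [hWvdef]
        refine continuousOn_pi.2 fun y => ?_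
        have hvc : ContinuousOn (fun s => v y.1 s) (Set.Ici (0:ℝ)) :=
          fun s hs => (hvderiv y.1 y.2 s hs).continuousWithinAt
        exact Real.continuous_exp.comp_continuousOn
          ((hvc.mono (Set.Icc_subset_Ici_self)).div_const h)
      · -- derivative of Wv
        intro s hs
        rw [hasDerivWithinAt_pi]
        intro y
        have hd : HasDerivWithinAt (fun r => v y.1 r)
            (discHam h Ωh ν Φp Φm (fun z => v z s) y.1) (Set.Ici s) s :=
          (hvderiv y.1 y.2 s hs.1).mono (Set.Ici_subset_Ici.2 hs.1)
        have hde : HasDerivWithinAt (fun r => Real.exp (v y.1 r / h))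
            (Real.exp (v y.1 s / h) * (discHam h Ωh ν Φp Φm (fun z => v z s) y.1 / h))
            (Set.Ici s) s := (hd.div_const h).exp
        have heq : Real.exp (v y.1 s / h)
            * (discHam h Ωh ν Φp Φm (fun z => v z s) y.1 / h) = A (Wv s) y := by
          rw [hWvdef]
          exact exp_discHam_eq hh Ωh ν Φp Φm (fun z => v z s) y
        rw [hWvdef]
        simpa [heq] using hde
      · -- initial values agree
        funext y
        rw [hW0, hWvdef, hw0def]
        simp only
        rw [hvinit y.1 y.2]
    have hWt : W t ⟨x, hx⟩ = Real.exp (v x t / h) := by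
      have := hWveq (Set.mem_Icc.2 ⟨ht0, le_refl t⟩)
      have := congrFun this ⟨x, hx⟩
      rw [this, hWvdef]
    simp only [dif_pos hx]
    rw [hWt, Real.log_exp, mul_comm, div_mul_cancel₀ _ hh']
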